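/- There exists a constant C > 0 such that the following holds for every integer m ≥ 2. Let n = 2^{2m}, N = n², and let B ⊆ 𝔽₂^n be a binary code of size N in which, for every codeword x, the number of codewords at Hamming distance w from x equals A_w, where A₀ = A_n = 1, A_{(n−√n)/2} = A_{(n+√n)/2} = n(n/2 − 1), A_{n/2} = 2(n−1), and A_w = 0 for all other w (the Kerdock distance distribution). Then the sum of distances of the spherical embedding of B satisfies | Σ_{x∈B} Σ_{y∈B} ‖x̃ − ỹ‖ − √2·N² + N^{3/2}/(4√2) | ≤ C·N. -/

import Mathlib

/-- The spherical embedding of a binary word `x ∈ 𝔽₂ⁿ`: the unit vector with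
coordinates `x̃ⱼ = (−1)^{xⱼ}/√n`. -/
noncomputable def binEmbed {n : ℕ} (x : Fin n → ZMod 2) : EuclideanSpace ℝ (Fin n) :=
  WithLp.toLp 2 fun j => (-1 : ℝ) ^ ((x j).val) / Real.sqrt n

lemma norm_binEmbed_sub {n : ℕ} (hn : 0 < n) (x y : Fin n → ZMod 2) :
    ‖binEmbed x - binEmbed y‖ = 2 * Real.sqrt (hammingDist x y) / Real.sqrt n := by
  have hn' : (0:ℝ) < n := by exact_mod_cast hn
  have hzm : ∀ a : ZMod 2, a = 0 ∨ a = 1 := by decide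
  have hxy : ∀ a b : ZMod 2, ((-1:ℝ) ^ a.val - (-1:ℝ) ^ b.val) ^ 2 =
      if a ≠ b then 4 else 0 := by
    intro a b
    rcases hzm a with rfl | rfl <;> rcases hzm b with rfl | rfl <;>
      simp [ZMod.val_one] <;> norm_num
  have key : ∀ j, ‖(binEmbed x - binEmbed y) j‖ ^ 2 =
      (if x j ≠ y j then 4 / (n:ℝ) else 0) := by
    intro j
    have : (binEmbed x - binEmbed y) j =
        ((-1:ℝ) ^ ((x j).val) - (-1:ℝ) ^ ((y j).val)) / Real.sqrt n := by
      simp [binEmbed, sub_div]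
    rw [this, Real.norm_eq_abs, ← abs_pow, div_pow, hxy, Real.sq_sqrt hn'.le]
    split_ifs <;> simp [abs_of_nonneg, div_nonneg, hn'.le]
  rw [EuclideanSpace.norm_eq]
  have hsum : ∑ j, ‖(binEmbed x - binEmbed y) j‖ ^ 2 = (hammingDist x y : ℝ) * (4 / n) := by
    simp only [key]
    rw [Finset.sum_ite, Finset.sum_const, Finset.sum_const, hammingDist]
    simp
  rw [hsum, Real.sqrt_mul (by positivity), show (4:ℝ)/n = 2^2/n by norm_num,
    Real.sqrt_div' (2^2) hn'.le, Real.sqrt_sq (by norm_num : (0:ℝ) ≤ 2)]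
  ring

lemma sum_fiber {α : Type*} [DecidableEq α] (s : Finset α) (f : α → ℕ) (n : ℕ)
    (hf : ∀ y ∈ s, f y ≤ n) (g : ℕ → ℝ) :
    ∑ y ∈ s, g (f y) =
      ∑ w ∈ Finset.range (n+1), ((s.filter fun y => f y = w).card : ℝ) * g w := by
  rw [← Finset.sum_fiberwise_of_maps_to
    (fun y hy => Finset.mem_range.2 (Nat.lt_succ_of_le (hf y hy))) (fun y => g (f y))]
  refine Finset.sum_congr rfl fun w _ => ?_
  rw [Finset.sum_congr rfl (fun y hy => by
      rw [(Finset.mem_filter.1 hy).2]), Finset.sum_const, nsmul_eq_mul]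

set_option maxHeartbeats 1600000 in
lemma abstract_est (p q r a b : ℝ) (hp : 2 ≤ p) (hpq : p * q = 1)
    (hr0 : 0 ≤ r) (hr2 : r^2 = 2)
    (ha0 : 0 ≤ a) (hb0 : 0 ≤ b)
    (ha2 : a^2 = 2*p^2 - p) (hb2 : b^2 = 2*p^2 + p) :
    |a + b - r*(2*p - q/16)| ≤ q^3/8 := by
  have hp0 : 0 < p := by linarith
  have hq0 : 0 < q := by nlinarith
  have hq2 : q ≤ 1/2 := by nlinarith
  have hq1 : q^2 ≤ 1/4 := by nlinarith
  have hpq2 : p^2*q^2 = 1 := by nlinarith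
  have hpq3 : p*q^3 = q^2 := by nlinarith
  have hr14 : 1.4 ≤ r := by nlinarith
  have hr15 : r ≤ 1.5 := by nlinarith
  have hab2 : (a*b)^2 = 4*p^4 - p^2 := by
    have h : (a*b)^2 = a^2*b^2 := by ring
    rw [h, ha2, hb2]; ring
  have hab0 : 0 ≤ a*b := mul_nonneg ha0 hb0
  have hcU : a*b ≤ 2*p^2 - 1/4 + q^2/256 := by
    refine le_of_pow_le_pow_left₀ (by norm_num : (2:ℕ) ≠ 0)
      (by nlinarith [sq_nonneg q, sq_nonneg (p-2)]) ?_
    rw [hab2]; nlinarith [hpq2, hq1, sq_nonneg (q^2)]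
  have hcL : 2*p^2 - 1/4 - q^2/32 ≤ a*b := by
    refine le_of_pow_le_pow_left₀ (by norm_num : (2:ℕ) ≠ 0) hab0 ?_
    rw [hab2]; nlinarith [hpq2, hq1, sq_nonneg (q^2), sq_nonneg q]
  have hs2 : (a+b)^2 = 4*p^2 + 2*(a*b) := by linear_combination ha2 + hb2
  have hQ2 : (r*(2*p - q/16))^2 = 8*p^2 - 1/2 + q^2/128 := by
    linear_combination (2*p - q/16)^2 * hr2 - (1/2) * hpq
  have ht0 : (0:ℝ) ≤ 2*p - q/16 := by linarith
  have hQ0 : 0 ≤ r*(2*p - q/16) := mul_nonneg hr0 ht0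
  have hsup : a + b ≤ r*(2*p - q/16) := by
    refine le_of_pow_le_pow_left₀ (by norm_num : (2:ℕ) ≠ 0) hQ0 ?_
    rw [hs2, hQ2]; linarith
  have hq4 : q^4 ≤ q^2/4 := by nlinarith [sq_nonneg q]
  have hq4' : q^4 ≤ 1/16 := by nlinarith
  have hq6 : q^6 ≤ q^2/16 := by nlinarith [hq4', sq_nonneg q]
  have hmid : q^2/128 + q^2/16 + q^6/64 ≤ r*(2*p - q/16)*(q^3/4) := by
    have hrq3 : r*(2*p - q/16)*(q^3/4) = (r*q^2)/2 - (r*q^4)/64 := by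
      linear_combination (r/2) * hpq3
    have h14q : 1.4*q^2 ≤ r*q^2 := by nlinarith [sq_nonneg q]
    have h15q : r*q^4 ≤ 1.5*q^4 := by nlinarith [sq_nonneg (q^2)]
    rw [hrq3]; linarith
  have hq3 : q^3 ≤ 1/8 := by nlinarith [pow_le_pow_left₀ hq0.le hq2 3]
  have hD0 : 0 ≤ r*(2*p - q/16) - q^3/8 := by
    have h := mul_le_mul_of_nonneg_right hr14 ht0
    linarith
  have hslo : r*(2*p - q/16) - q^3/8 ≤ a + b := by
    refine le_of_pow_le_pow_left₀ (by norm_num : (2:ℕ) ≠ 0) (by positivity) ?_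
    have hDexp : (r*(2*p - q/16) - q^3/8)^2
        = (r*(2*p - q/16))^2 - r*(2*p - q/16)*(q^3/4) + q^6/64 := by ring
    rw [hDexp, hQ2, hs2]
    linarith
  have hq3' : (0:ℝ) ≤ q^3 := by positivity
  rw [abs_le]
  constructor <;> linarith

lemma kerdock_sqrt_est (p : ℝ) (hp : 2 ≤ p) :
    |Real.sqrt (2*p^2 - p) + Real.sqrt (2*p^2 + p)
      - Real.sqrt 2 * (2*p - 1/(16*p))| ≤ 1/(8*p^3) := by
  have hp0 : 0 < p := by linarith
  have hA0 : (0:ℝ) ≤ 2*p^2 - p := by nlinarith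
  have hB0 : (0:ℝ) ≤ 2*p^2 + p := by nlinarith
  have h := abstract_est p (1/p) (Real.sqrt 2) (Real.sqrt (2*p^2 - p))
    (Real.sqrt (2*p^2 + p)) hp (by field_simp) (Real.sqrt_nonneg 2)
    (Real.sq_sqrt (by norm_num)) (Real.sqrt_nonneg _) (Real.sqrt_nonneg _)
    (Real.sq_sqrt hA0) (Real.sq_sqrt hB0)
  have e1 : (1/p)/16 = 1/(16*p) := by ring
  have e2 : (1/p)^3/8 = 1/(8*p^3) := by field_simp
  rw [e1, e2] at h
  exact h

lemma kerdock_iden (P r a b : ℝ) (hP : P ≠ 0) (hr : r ≠ 0) :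
    (16*P^4) * ((4*P^2*(2*P^2-1)) * (a/P) + (2*(4*P^2-1)) * r
        + (4*P^2*(2*P^2-1)) * (b/P) + 2)
      - r * ((4*P^2)^2)^2 + 8*r*P^6
      = (32 - 28*r)*P^4 + 64*P^5*(2*P^2-1)*(a + b - r*(2*P - 1/(16*P))) := by
  field_simp
  ring

set_option maxHeartbeats 1000000 in
/-- Any binary code of length `n = 2^{2m}`, size `N = n²`, with the Kerdock distance
distribution (`A₀ = A_n = 1`, `A_{(n±√n)/2} = n(n/2−1)`, `A_{n/2} = 2(n−1)`) has
spherical sum of distances `√2·N² − N^{3/2}/(4√2) + O(N)`, uniformly in `m ≥ 2`. -/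
theorem kerdock_sum_dist_asymptotics :
    ∃ C : ℝ, 0 < C ∧ ∀ m : ℕ, 2 ≤ m →
      ∀ B : Finset (Fin (2 ^ (2 * m)) → ZMod 2),
        B.card = (2 ^ (2 * m)) ^ 2 →
        (∀ x ∈ B, ∀ w : ℕ,
          (B.filter fun y => hammingDist x y = w).card =
            (if w = 0 ∨ w = 2 ^ (2 * m) then 1
             else if w = (2 ^ (2 * m) - 2 ^ m) / 2 ∨ w = (2 ^ (2 * m) + 2 ^ m) / 2 then
               2 ^ (2 * m) * (2 ^ (2 * m) / 2 - 1)
             else if w = 2 ^ (2 * m) / 2 then 2 * (2 ^ (2 * m) - 1)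
             else 0)) →
        |∑ x ∈ B, ∑ y ∈ B, ‖binEmbed x - binEmbed y‖
            - Real.sqrt 2 * (((2 ^ (2 * m) : ℝ) ^ 2) ^ 2)
            + ((2 ^ (2 * m) : ℝ) ^ 2) ^ ((3 : ℝ) / 2) / (4 * Real.sqrt 2)|
          ≤ C * ((2 ^ (2 * m) : ℝ) ^ 2) := by
  refine ⟨100, by norm_num, ?_⟩
  intro m hm B hcard hdist
  set p : ℕ := 2 ^ (m - 1) with hpdef
  have hp2 : 2 ≤ p := by
    rw [hpdef]
    calc 2 = 2^1 := by norm_num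
    _ ≤ 2^(m-1) := Nat.pow_le_pow_right (by norm_num) (by omega)
  have hk : 2 ^ m = 2 * p := by
    rw [hpdef, ← pow_succ']
    congr 1; omega
  have hn : 2 ^ (2*m) = 4 * p^2 := by
    rw [two_mul, pow_add, hk]; ring
  have hppos : 0 < p := by omega
  have hnpos : 0 < 2^(2*m) := Nat.pow_pos (by norm_num)
  have e1 : (2^(2*m) - 2^m)/2 = 2*p^2 - p := by rw [hn, hk]; omega
  have e2 : (2^(2*m) + 2^m)/2 = 2*p^2 + p := by rw [hn, hk]; omega
  have e3 : 2^(2*m)/2 = 2*p^2 := by rw [hn]; omega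
  set P : ℝ := ((p : ℕ) : ℝ) with hPdef
  have hP2 : (2:ℝ) ≤ P := by rw [hPdef]; exact_mod_cast hp2
  have hP0 : (0:ℝ) < P := by linarith
  set r : ℝ := Real.sqrt 2 with hrdef
  have hr0 : 0 ≤ r := Real.sqrt_nonneg 2
  have hr2 : r^2 = 2 := Real.sq_sqrt (by norm_num)
  have hr14 : 1.4 ≤ r := by nlinarith
  have hr15 : r ≤ 1.5 := by nlinarith
  set a : ℝ := Real.sqrt (2*P^2 - P) with hadef
  set b : ℝ := Real.sqrt (2*P^2 + P) with hbdef
  set g : ℕ → ℝ := fun w => 2 * Real.sqrt w / Real.sqrt ((2^(2*m) : ℕ) : ℝ) with hgdef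
  have hsqn : Real.sqrt ((2^(2*m) : ℕ) : ℝ) = 2*P := by
    rw [hn]
    rw [show ((4*p^2 : ℕ) : ℝ) = (2*P)^2 by push_cast; ring]
    exact Real.sqrt_sq (by positivity)
  have hg0 : g 0 = 0 := by simp [hgdef]
  have hgn : g (4*p^2) = 2 := by
    simp only [hgdef]
    rw [hsqn, show ((4*p^2 : ℕ) : ℝ) = (2*P)^2 by push_cast; ring,
      Real.sqrt_sq (by positivity)]
    field_simp
  have hghalf : g (2*p^2) = r := by
    simp only [hgdef]
    rw [hsqn, show ((2*p^2 : ℕ) : ℝ) = (r*P)^2 by push_cast; linear_combination (-(P^2))*hr2,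
      Real.sqrt_sq (by positivity)]
    field_simp
  have hple : p ≤ 2*p^2 := by nlinarith
  have hgw1 : g (2*p^2 - p) = a / P := by
    simp only [hgdef]
    rw [hsqn, show ((2*p^2 - p : ℕ):ℝ) = 2*P^2 - P by push_cast [hple]; ring, ← hadef]
    field_simp
  have hgw2 : g (2*p^2 + p) = b / P := by
    simp only [hgdef]
    rw [hsqn, show ((2*p^2 + p : ℕ):ℝ) = 2*P^2 + P by push_cast; ring, ← hbdef]
    field_simp
  have inner : ∀ x ∈ B, ∑ y ∈ B, ‖binEmbed x - binEmbed y‖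
      = (4*P^2*(2*P^2-1)) * (a/P) + (2*(4*P^2-1)) * r + (4*P^2*(2*P^2-1)) * (b/P) + 2 := by
    intro x hx
    have hrw : ∀ y ∈ B, ‖binEmbed x - binEmbed y‖ = g (hammingDist x y) := by
      intro y _
      rw [norm_binEmbed_sub hnpos x y]
    rw [Finset.sum_congr rfl hrw, sum_fiber B (hammingDist x) (2^(2*m))
      (fun y _ => le_trans (hammingDist_le_card_fintype) (le_of_eq (by simp))) g]
    have hterm : ∀ w ∈ Finset.range (2^(2*m)+1),
        ((B.filter fun y => hammingDist x y = w).card : ℝ) * g w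
        = ((if w = 0 ∨ w = 4*p^2 then 1
             else if w = 2*p^2 - p ∨ w = 2*p^2 + p then 4*p^2 * (2*p^2 - 1)
             else if w = 2*p^2 then 2 * (4*p^2 - 1)
             else 0 : ℕ) : ℝ) * g w := by
      intro w _
      rw [hdist x hx w, e1, e2, e3, hn]
    rw [Finset.sum_congr rfl hterm]
    have hvanish : ∀ w ∈ Finset.range (2^(2*m)+1),
        w ∉ ({0, 2*p^2 - p, 2*p^2, 2*p^2 + p, 4*p^2} : Finset ℕ) →
        ((if w = 0 ∨ w = 4*p^2 then 1
             else if w = 2*p^2 - p ∨ w = 2*p^2 + p then 4*p^2 * (2*p^2 - 1)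
             else if w = 2*p^2 then 2 * (4*p^2 - 1)
             else 0 : ℕ) : ℝ) * g w = 0 := by
      intro w _ hnotmem
      simp only [Finset.mem_insert, Finset.mem_singleton] at hnotmem
      push_neg at hnotmem
      obtain ⟨h1, h2, h3, h4, h5⟩ := hnotmem
      rw [if_neg (by omega), if_neg (by omega), if_neg (by omega)]
      simp
    have hsub : ({0, 2*p^2 - p, 2*p^2, 2*p^2 + p, 4*p^2} : Finset ℕ) ⊆
        Finset.range (2^(2*m)+1) := by
      intro w hw
      simp only [Finset.mem_insert, Finset.mem_singleton] at hw
      rw [Finset.mem_range, hn]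
      have h2p : 2*p ≤ p^2 := by nlinarith
      rcases hw with rfl|rfl|rfl|rfl|rfl <;> omega
    rw [← Finset.sum_subset hsub hvanish]
    have h2p : 2*p ≤ p^2 := by nlinarith
    have d1 : (0:ℕ) ∉ ({2*p^2 - p, 2*p^2, 2*p^2 + p, 4*p^2} : Finset ℕ) := by
      simp only [Finset.mem_insert, Finset.mem_singleton]
      push_neg
      exact ⟨by omega, by omega, by omega, by omega⟩
    have d2 : (2*p^2 - p : ℕ) ∉ ({2*p^2, 2*p^2 + p, 4*p^2} : Finset ℕ) := by
      simp only [Finset.mem_insert, Finset.mem_singleton]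
      push_neg
      exact ⟨by omega, by omega, by omega⟩
    have d3 : (2*p^2 : ℕ) ∉ ({2*p^2 + p, 4*p^2} : Finset ℕ) := by
      simp only [Finset.mem_insert, Finset.mem_singleton]
      push_neg
      exact ⟨by omega, by omega⟩
    have d4 : (2*p^2 + p : ℕ) ∉ ({4*p^2} : Finset ℕ) := by
      simp only [Finset.mem_singleton]
      omega
    rw [Finset.sum_insert d1, Finset.sum_insert d2, Finset.sum_insert d3,
      Finset.sum_insert d4, Finset.sum_singleton]
    have k0 : (if (0:ℕ) = 0 ∨ (0:ℕ) = 4*p^2 then (1:ℕ)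
        else if (0:ℕ) = 2*p^2 - p ∨ (0:ℕ) = 2*p^2 + p then 4*p^2 * (2*p^2 - 1)
        else if (0:ℕ) = 2*p^2 then 2 * (4*p^2 - 1) else 0) = 1 := by simp
    have k1 : (if (2*p^2-p:ℕ) = 0 ∨ (2*p^2-p:ℕ) = 4*p^2 then (1:ℕ)
        else if (2*p^2-p:ℕ) = 2*p^2 - p ∨ (2*p^2-p:ℕ) = 2*p^2 + p then 4*p^2 * (2*p^2 - 1)
        else if (2*p^2-p:ℕ) = 2*p^2 then 2 * (4*p^2 - 1) else 0) = 4*p^2 * (2*p^2 - 1) := by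
      rw [if_neg (by omega), if_pos (by omega)]
    have k2 : (if (2*p^2:ℕ) = 0 ∨ (2*p^2:ℕ) = 4*p^2 then (1:ℕ)
        else if (2*p^2:ℕ) = 2*p^2 - p ∨ (2*p^2:ℕ) = 2*p^2 + p then 4*p^2 * (2*p^2 - 1)
        else if (2*p^2:ℕ) = 2*p^2 then 2 * (4*p^2 - 1) else 0) = 2 * (4*p^2 - 1) := by
      rw [if_neg (by omega), if_neg (by omega), if_pos rfl]
    have k3 : (if (2*p^2+p:ℕ) = 0 ∨ (2*p^2+p:ℕ) = 4*p^2 then (1:ℕ)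
        else if (2*p^2+p:ℕ) = 2*p^2 - p ∨ (2*p^2+p:ℕ) = 2*p^2 + p then 4*p^2 * (2*p^2 - 1)
        else if (2*p^2+p:ℕ) = 2*p^2 then 2 * (4*p^2 - 1) else 0) = 4*p^2 * (2*p^2 - 1) := by
      rw [if_neg (by omega), if_pos (by omega)]
    have k4 : (if (4*p^2:ℕ) = 0 ∨ (4*p^2:ℕ) = 4*p^2 then (1:ℕ)
        else if (4*p^2:ℕ) = 2*p^2 - p ∨ (4*p^2:ℕ) = 2*p^2 + p then 4*p^2 * (2*p^2 - 1)
        else if (4*p^2:ℕ) = 2*p^2 then 2 * (4*p^2 - 1) else 0) = 1 := by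
      rw [if_pos (by omega)]
    rw [k0, k1, k2, k3, k4, hg0, hgn, hghalf, hgw1, hgw2]
    have cc1 : ((4*p^2 * (2*p^2 - 1) : ℕ) : ℝ) = 4*P^2*(2*P^2-1) := by
      have h1 : (1:ℕ) ≤ 2*p^2 := by nlinarith
      push_cast [h1]; ring
    have cc2 : ((2 * (4*p^2 - 1) : ℕ) : ℝ) = 2*(4*P^2-1) := by
      have h1 : (1:ℕ) ≤ 4*p^2 := by nlinarith
      push_cast [h1]; ring
    rw [cc1, cc2]
    push_cast
    ring
  have total : ∑ x ∈ B, ∑ y ∈ B, ‖binEmbed x - binEmbed y‖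
      = (16*P^4) * ((4*P^2*(2*P^2-1)) * (a/P) + (2*(4*P^2-1)) * r
        + (4*P^2*(2*P^2-1)) * (b/P) + 2) := by
    rw [Finset.sum_congr rfl inner, Finset.sum_const, hcard, nsmul_eq_mul]
    congr 1
    rw [hn]
    push_cast
    ring
  rw [total]
  have hcast : ((2:ℝ)^(2*m)) = 4*P^2 := by
    have h : ((2:ℝ)^(2*m)) = ((2^(2*m) : ℕ) : ℝ) := by push_cast; ring
    rw [h, hn]; push_cast; ring
  have hrpow : (((2:ℝ)^(2*m))^2) ^ ((3:ℝ)/2) = (4*P^2)^3 := by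
    rw [hcast, ← Real.rpow_natCast (4*P^2 : ℝ) 2,
      ← Real.rpow_mul (by positivity : (0:ℝ) ≤ 4*P^2),
      show ((2:ℕ):ℝ) * ((3:ℝ)/2) = ((3:ℕ):ℝ) by push_cast; norm_num,
      Real.rpow_natCast]
  rw [hrpow, hcast]
  have hrpos : (0:ℝ) < r := by nlinarith
  have hdiv : (4*P^2)^3 / (4*r) = 8*r*P^6 := by
    rw [div_eq_iff (by positivity : (4*r) ≠ 0)]
    linear_combination (-(32*P^6))*hr2
  rw [hdiv]
  have hest := kerdock_sqrt_est P hP2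
  rw [← hadef, ← hbdef, ← hrdef] at hest
  rw [kerdock_iden P r a b hP0.ne' hrpos.ne']
  have h2P1 : (0:ℝ) ≤ 2*P^2 - 1 := by nlinarith
  have hcoef : (0:ℝ) ≤ 64*P^5*(2*P^2-1) :=
    mul_nonneg (by positivity) h2P1
  have habs : |(32 - 28*r)*P^4 + 64*P^5*(2*P^2-1)*(a + b - r*(2*P - 1/(16*P)))|
      ≤ |32 - 28*r| * P^4 + 64*P^5*(2*P^2-1) * |a + b - r*(2*P - 1/(16*P))| := by
    calc |(32 - 28*r)*P^4 + 64*P^5*(2*P^2-1)*(a + b - r*(2*P - 1/(16*P)))|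
        ≤ |(32 - 28*r)*P^4| + |64*P^5*(2*P^2-1)*(a + b - r*(2*P - 1/(16*P)))| := abs_add_le _ _
      _ = |32 - 28*r| * P^4 + 64*P^5*(2*P^2-1) * |a + b - r*(2*P - 1/(16*P))| := by
          rw [abs_mul, abs_mul, abs_of_nonneg (by positivity : (0:ℝ) ≤ P^4),
            abs_of_nonneg hcoef]
  refine le_trans habs ?_
  have h1 : |32 - 28*r| ≤ 74 := by
    rw [abs_le]; constructor <;> nlinarith
  have h2 : 64*P^5*(2*P^2-1) * |a + b - r*(2*P - 1/(16*P))| ≤ 16*P^4 := by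
    have h4 : 64*P^5*(2*P^2-1) ≤ 128*P^7 := by nlinarith [pow_nonneg hP0.le 5]
    calc 64*P^5*(2*P^2-1) * |a + b - r*(2*P - 1/(16*P))| ≤ 128*P^7 * (1/(8*P^3)) :=
          mul_le_mul h4 hest (abs_nonneg _) (by positivity)
      _ = 16*P^4 := by field_simp; ring
  have h5 := mul_le_mul_of_nonneg_right h1 (show (0:ℝ) ≤ P^4 by positivity)
  rw [show (100:ℝ) * (4*P^2)^2 = 1600*P^4 by ring]
  have h6 : (0:ℝ) ≤ P^4 := by positivity
  linarith
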